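/- Let a, γ, δ, ε, q be real numbers with γ < 1, let N be a natural number, and let (a_n)_{n ≥ 0} be real numbers such that a_n = 0 for all n > N and such that for every integer n ≥ 0 (with the convention a_{−1} = a_{−2} = 0): a·n(n−γ)·a_n + [ −a(n−1)(n−γ−δ) − (n−1+ε)(n−γ) − q ]·a_{n−1} + (n−γ−δ)(n−2+ε)·a_{n−2} = 0. Then the finite sum u(z) = Σ_{n=0}^{N} a_n B_z(1−γ+n, 1−δ) satisfies, at every z ∈ (0,1) with z ≠ a, the general Heun equation with αβ = 0: u''(z) + (γ/z + δ/(z−1) + ε/(z−a)) u'(z) − q/(z(z−1)(z−a)) u(z) = 0. -/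

import Mathlib

/-- The incomplete Beta function `B_z(p,q) = ∫_0^z t^(p-1) (1-t)^(q-1) dt`. -/
noncomputable def incBeta (p q z : ℝ) : ℝ :=
  ∫ t in (0:ℝ)..z, t ^ (p - 1) * (1 - t) ^ (q - 1)

open Real MeasureTheory Set Finset

namespace HeunAuxZ

lemma one_sub_ne {x : ℝ} (h : x < 1) : (1:ℝ) - x ≠ 0 := by intro h'; nlinarith

lemma integrable_integrand {p qq z : ℝ} (hp : 0 < p) (h0 : 0 < z) (h1 : z < 1) :
    IntervalIntegrable (fun t : ℝ => t ^ (p - 1) * (1 - t) ^ (qq - 1)) volume 0 z := by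
  apply IntervalIntegrable.mul_continuousOn (intervalIntegral.intervalIntegrable_rpow' (by linarith))
  rw [uIcc_of_le h0.le]
  apply ContinuousOn.rpow_const (continuousOn_const.sub continuous_id.continuousOn)
  intro x hx
  exact Or.inl (one_sub_ne (lt_of_le_of_lt hx.2 h1))

lemma contOn_integrand {p qq : ℝ} :
    ContinuousOn (fun t : ℝ => t ^ (p - 1) * (1 - t) ^ (qq - 1)) (Ioo (0:ℝ) 1) := by
  apply ContinuousOn.mul
  · exact ContinuousOn.rpow_const continuous_id.continuousOn fun x hx => Or.inl (ne_of_gt hx.1)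
  · exact ContinuousOn.rpow_const (continuousOn_const.sub continuous_id.continuousOn)
      fun x hx => Or.inl (one_sub_ne hx.2)

lemma hasDerivAt_incBeta {p z : ℝ} (qq : ℝ) (hp : 0 < p) (h0 : 0 < z) (h1 : z < 1) :
    HasDerivAt (incBeta p qq) (z ^ (p - 1) * (1 - z) ^ (qq - 1)) z := by
  exact intervalIntegral.integral_hasDerivAt_right (integrable_integrand hp h0 h1)
    (contOn_integrand.stronglyMeasurableAtFilter isOpen_Ioo z ⟨h0, h1⟩)
    (contOn_integrand.continuousAt (isOpen_Ioo.mem_nhds ⟨h0, h1⟩))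

lemma hasDerivAt_pp (e1 e2 : ℝ) {z : ℝ} (h0 : 0 < z) (h1 : z < 1) :
    HasDerivAt (fun w : ℝ => w ^ e1 * (1 - w) ^ e2)
      (e1 * z ^ (e1 - 1) * (1 - z) ^ e2 - e2 * z ^ e1 * (1 - z) ^ (e2 - 1)) z := by
  have hb : HasDerivAt (fun w : ℝ => 1 - w) (-1) z := by
    simpa using (hasDerivAt_id z).const_sub 1
  have h2 : HasDerivAt (fun w : ℝ => (1 - w) ^ e2)
      ((e2 * (1 - z) ^ (e2 - 1)) * (-1)) z :=
    (Real.hasDerivAt_rpow_const (x := 1 - z) (p := e2) (Or.inl (one_sub_ne h1))).comp z hb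
  have h1' : HasDerivAt (fun w : ℝ => w ^ e1) (e1 * z ^ (e1 - 1)) z :=
    Real.hasDerivAt_rpow_const (Or.inl h0.ne')
  have := h1'.fun_mul h2
  exact this.congr_deriv (by ring)

lemma contig (p δ z : ℝ) (hp : 0 < p) (h0 : 0 < z) (h1 : z < 1) :
    p * incBeta p (1 - δ) z - (p + (1 - δ)) * incBeta (p + 1) (1 - δ) z
      = z ^ p * (1 - z) ^ (1 - δ) := by
  have h1z : (0:ℝ) < 1 - z := by linarith
  set g : ℝ → ℝ := fun t => p * (t ^ (p - 1) * (1 - t) ^ ((1 - δ) - 1))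
      - (p + (1 - δ)) * (t ^ ((p + 1) - 1) * (1 - t) ^ ((1 - δ) - 1)) with hg
  have hint1 : IntervalIntegrable (fun t : ℝ => t ^ (p - 1) * (1 - t) ^ ((1 - δ) - 1))
      volume 0 z := integrable_integrand hp h0 h1
  have hint2 : IntervalIntegrable (fun t : ℝ => t ^ ((p + 1) - 1) * (1 - t) ^ ((1 - δ) - 1))
      volume 0 z := integrable_integrand (by linarith) h0 h1
  have hint : IntervalIntegrable g volume 0 z := (hint1.const_mul p).sub (hint2.const_mul _)
  have hderiv : ∀ t ∈ Ioo (0:ℝ) z,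
      HasDerivAt (fun t : ℝ => t ^ p * (1 - t) ^ (1 - δ)) (g t) t := by
    intro t ht
    have ht0 : 0 < t := ht.1
    have ht1 : t < 1 := lt_trans ht.2 h1
    have h := hasDerivAt_pp p (1 - δ) ht0 ht1
    convert h using 1
    have e1 : t ^ p = t ^ (p - 1) * t := by
      rw [show p = (p - 1) + 1 by ring, Real.rpow_add_one ht0.ne']; ring_nf
    have e2 : t ^ ((p + 1) - 1) = t ^ (p - 1) * t := by
      rw [show (p + 1) - 1 = (p - 1) + 1 by ring, Real.rpow_add_one ht0.ne']
    have e3 : (1 - t) ^ (1 - δ) = (1 - t) ^ ((1 - δ) - 1) * (1 - t) := by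
      rw [show (1 - δ) = ((1 - δ) - 1) + 1 by ring, Real.rpow_add_one (by linarith : (1:ℝ) - t ≠ 0)]
      ring_nf
    rw [hg]
    simp only
    rw [e2, e3, e1]
    ring
  have hcont : ContinuousOn (fun t : ℝ => t ^ p * (1 - t) ^ (1 - δ)) (Icc 0 z) := by
    apply ContinuousOn.mul
    · exact ContinuousOn.rpow_const continuous_id.continuousOn fun x hx => Or.inr hp.le
    · exact ContinuousOn.rpow_const (continuousOn_const.sub continuous_id.continuousOn)
        fun x hx => Or.inl (one_sub_ne (lt_of_le_of_lt hx.2 h1))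
  have hFTC := intervalIntegral.integral_eq_sub_of_hasDerivAt_of_le h0.le hcont hderiv hint
  have hsplit : ∫ t in (0:ℝ)..z, g t
      = p * incBeta p (1 - δ) z - (p + (1 - δ)) * incBeta (p + 1) (1 - δ) z := by
    rw [hg, incBeta, incBeta]
    rw [intervalIntegral.integral_sub (hint1.const_mul p) (hint2.const_mul _),
      intervalIntegral.integral_const_mul, intervalIntegral.integral_const_mul]
  rw [hsplit] at hFTC
  rw [hFTC, Real.zero_rpow hp.ne']
  ring

end HeunAuxZ

/-- Let `a, γ, δ, ε, q` be real with `γ < 1`, let `N : ℕ`, and let `(c_n)` be reals with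
`c_n = 0` for `n > N` satisfying, for every `n ≥ 0` with the convention `c_{-1} = c_{-2} = 0`,
`a n(n−γ) c_n + [−a(n−1)(n−γ−δ) − (n−1+ε)(n−γ) − q] c_{n−1} + (n−γ−δ)(n−2+ε) c_{n−2} = 0`.
Then `u(z) = Σ_{n=0}^{N} c_n B_z(1−γ+n, 1−δ)` satisfies, at every `z ∈ (0,1)` with `z ≠ a`,
the general Heun equation with `αβ = 0`:
`u'' + (γ/z + δ/(z−1) + ε/(z−a)) u' − q/(z(z−1)(z−a)) u = 0`. -/
theorem heun_incBeta_finite_sum_solution (a γ δ ε q : ℝ) (hγ : γ < 1) (N : ℕ) (c : ℕ → ℝ)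
    (hvanish : ∀ n : ℕ, N < n → c n = 0)
    (hrec : ∀ n : ℕ,
      a * (n : ℝ) * ((n : ℝ) - γ) * c n
        + (-a * ((n : ℝ) - 1) * ((n : ℝ) - γ - δ) - ((n : ℝ) - 1 + ε) * ((n : ℝ) - γ) - q) *
            (if 1 ≤ n then c (n - 1) else 0)
        + (((n : ℝ) - γ - δ) * ((n : ℝ) - 2 + ε)) * (if 2 ≤ n then c (n - 2) else 0) = 0) :
    ∀ z ∈ Set.Ioo (0:ℝ) 1, z ≠ a →
      DifferentiableAt ℝ
        (fun z => ∑ n ∈ Finset.range (N + 1), c n * incBeta (1 - γ + n) (1 - δ) z) z ∧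
      DifferentiableAt ℝ
        (deriv (fun z => ∑ n ∈ Finset.range (N + 1), c n * incBeta (1 - γ + n) (1 - δ) z)) z ∧
      deriv (deriv
          (fun z => ∑ n ∈ Finset.range (N + 1), c n * incBeta (1 - γ + n) (1 - δ) z)) z
        + (γ / z + δ / (z - 1) + ε / (z - a)) *
            deriv (fun z => ∑ n ∈ Finset.range (N + 1), c n * incBeta (1 - γ + n) (1 - δ) z) z
        - q / (z * (z - 1) * (z - a)) *
            (∑ n ∈ Finset.range (N + 1), c n * incBeta (1 - γ + n) (1 - δ) z) = 0 := by
  intro z hz hza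
  obtain ⟨hz0, hz1⟩ := hz
  have h1z : (0:ℝ) < 1 - z := by linarith
  have hzne : z ≠ 0 := hz0.ne'
  have h1zne : (1:ℝ) - z ≠ 0 := h1z.ne'
  have hz1ne : z - 1 ≠ 0 := by intro h; nlinarith
  have hzane : z - a ≠ 0 := sub_ne_zero_of_ne hza
  have hp : ∀ n : ℕ, (0:ℝ) < 1 - γ + (n:ℝ) := by
    intro n
    have : (0:ℝ) ≤ (n:ℝ) := Nat.cast_nonneg n
    linarith
  have hu : ∀ w ∈ Set.Ioo (0:ℝ) 1,
      HasDerivAt (fun z => ∑ n ∈ Finset.range (N + 1), c n * incBeta (1 - γ + n) (1 - δ) z)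
        (∑ n ∈ Finset.range (N + 1),
          c n * (w ^ ((1 - γ + (n:ℝ)) - 1) * (1 - w) ^ ((1 - δ) - 1))) w := by
    intro w hw
    apply HasDerivAt.fun_sum
    intro n _
    exact (HeunAuxZ.hasDerivAt_incBeta (1 - δ) (hp n) hw.1 hw.2).const_mul (c n)
  have hzIoo : z ∈ Set.Ioo (0:ℝ) 1 := ⟨hz0, hz1⟩
  have hev : deriv (fun z => ∑ n ∈ Finset.range (N + 1), c n * incBeta (1 - γ + n) (1 - δ) z)
      =ᶠ[nhds z] fun w => ∑ n ∈ Finset.range (N + 1),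
          c n * (w ^ ((1 - γ + (n:ℝ)) - 1) * (1 - w) ^ ((1 - δ) - 1)) := by
    filter_upwards [isOpen_Ioo.mem_nhds hzIoo] with w hw
    exact (hu w hw).deriv
  have hVd : HasDerivAt (fun w => ∑ n ∈ Finset.range (N + 1),
        c n * (w ^ ((1 - γ + (n:ℝ)) - 1) * (1 - w) ^ ((1 - δ) - 1)))
      (∑ n ∈ Finset.range (N + 1),
        c n * (((1 - γ + (n:ℝ)) - 1) * z ^ (((1 - γ + (n:ℝ)) - 1) - 1) * (1 - z) ^ ((1 - δ) - 1)
          - ((1 - δ) - 1) * z ^ ((1 - γ + (n:ℝ)) - 1) * (1 - z) ^ (((1 - δ) - 1) - 1))) z := by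
    apply HasDerivAt.fun_sum
    intro n _
    exact (HeunAuxZ.hasDerivAt_pp _ _ hz0 hz1).const_mul (c n)
  refine ⟨(hu z hzIoo).differentiableAt, (hev.differentiableAt_iff).mpr hVd.differentiableAt, ?_⟩
  have hd1 : deriv (fun z => ∑ n ∈ Finset.range (N + 1), c n * incBeta (1 - γ + n) (1 - δ) z) z
      = ∑ n ∈ Finset.range (N + 1),
          c n * (z ^ ((1 - γ + (n:ℝ)) - 1) * (1 - z) ^ ((1 - δ) - 1)) := (hu z hzIoo).deriv
  have hd2 : deriv (deriv (fun z => ∑ n ∈ Finset.range (N + 1),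
        c n * incBeta (1 - γ + n) (1 - δ) z)) z
      = ∑ n ∈ Finset.range (N + 1),
        c n * (((1 - γ + (n:ℝ)) - 1) * z ^ (((1 - γ + (n:ℝ)) - 1) - 1) * (1 - z) ^ ((1 - δ) - 1)
          - ((1 - δ) - 1) * z ^ ((1 - γ + (n:ℝ)) - 1) * (1 - z) ^ (((1 - δ) - 1) - 1)) :=
    (hev.deriv_eq).trans hVd.deriv
  rw [hd1, hd2]
  set d : ℕ → ℝ := fun n => a * ((n:ℝ) + 1) * c (n + 1) - ((n:ℝ) + ε) * c n with hd
  have Qrel : ∀ n : ℕ, q * c n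
      = ((n:ℝ) + 1 - γ) * d n - ((n:ℝ) + 1 - γ - δ) * (if 1 ≤ n then d (n - 1) else 0) := by
    intro n
    have h := hrec (n + 1)
    cases n with
    | zero =>
      norm_num at h ⊢
      simp only [hd]
      push_cast
      linear_combination -h
    | succ m =>
      rw [if_pos (by omega : 1 ≤ m + 1 + 1), if_pos (by omega : 2 ≤ m + 1 + 1)] at h
      rw [(by omega : m + 1 + 1 - 1 = m + 1), (by omega : m + 1 + 1 - 2 = m)] at h
      rw [if_pos (by omega : 1 ≤ m + 1), (by omega : m + 1 - 1 = m)]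
      simp only [hd]
      push_cast at h ⊢
      linear_combination -h
  have hdN : (((N:ℝ) + 1) + 1 - γ - δ) * d N = 0 := by
    have h := hrec (N + 2)
    rw [if_pos (by omega : 1 ≤ N + 2), if_pos (by omega : 2 ≤ N + 2)] at h
    rw [(by omega : N + 2 - 1 = N + 1), (by omega : N + 2 - 2 = N)] at h
    rw [hvanish (N + 1) (by omega), hvanish (N + 2) (by omega)] at h
    simp only [hd]
    rw [hvanish (N + 1) (by omega)]
    push_cast at h ⊢
    linear_combination -h
  have hq0 : q * (∑ n ∈ Finset.range (N + 1), c n * incBeta (1 - γ + n) (1 - δ) z)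
      = ∑ n ∈ Finset.range (N + 1), d n * (z ^ (1 - γ + (n:ℝ)) * (1 - z) ^ (1 - δ)) := by
    have step1 : q * (∑ n ∈ Finset.range (N + 1), c n * incBeta (1 - γ + n) (1 - δ) z)
        = (∑ n ∈ Finset.range (N + 1), ((n:ℝ) + 1 - γ) * d n * incBeta (1 - γ + n) (1 - δ) z)
          - ∑ n ∈ Finset.range (N + 1),
              ((n:ℝ) + 1 - γ - δ) * (if 1 ≤ n then d (n - 1) else 0)
                * incBeta (1 - γ + n) (1 - δ) z := by
      rw [Finset.mul_sum, ← Finset.sum_sub_distrib]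
      refine Finset.sum_congr rfl fun n _ => ?_
      linear_combination (Qrel n) * incBeta (1 - γ + (n:ℝ)) (1 - δ) z
    have hΦ1 : (∑ n ∈ Finset.range (N + 1),
          ((n:ℝ) + 1 - γ - δ) * (if 1 ≤ n then d (n - 1) else 0)
            * incBeta (1 - γ + n) (1 - δ) z)
        = ∑ n ∈ Finset.range N,
            (((n:ℝ) + 1) + 1 - γ - δ) * d n * incBeta (1 - γ + ((n + 1 : ℕ) : ℝ)) (1 - δ) z := by
      rw [Finset.sum_range_succ']
      norm_num
    have hΦ2 : (∑ n ∈ Finset.range N,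
          (((n:ℝ) + 1) + 1 - γ - δ) * d n * incBeta (1 - γ + ((n + 1 : ℕ) : ℝ)) (1 - δ) z)
        = ∑ n ∈ Finset.range (N + 1),
            (((n:ℝ) + 1) + 1 - γ - δ) * d n * incBeta (1 - γ + ((n + 1 : ℕ) : ℝ)) (1 - δ) z := by
      rw [Finset.sum_range_succ]
      have hN0 : (((N:ℝ) + 1) + 1 - γ - δ) * d N
          * incBeta (1 - γ + ((N + 1 : ℕ) : ℝ)) (1 - δ) z = 0 := by
        rw [hdN, zero_mul]
      rw [hN0, add_zero]
    rw [step1, hΦ1, hΦ2, ← Finset.sum_sub_distrib]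
    refine Finset.sum_congr rfl fun n _ => ?_
    have hB : incBeta (1 - γ + ((n + 1 : ℕ) : ℝ)) (1 - δ) z
        = incBeta ((1 - γ + (n:ℝ)) + 1) (1 - δ) z := by
      congr 1
      push_cast
      ring
    rw [hB]
    linear_combination (d n) * HeunAuxZ.contig (1 - γ + (n:ℝ)) δ z (hp n) hz0 hz1
  -- the main polynomial identity
  set Gf : ℕ → ℝ := fun m =>
      (z - 1) * (1 - z) ^ ((1 - δ) - 1) * (a * (m:ℝ) * c m * z ^ ((1 - γ + (m:ℝ)) - 1)) with hGf
  have hmain : z * (z - 1) * (z - a) * (∑ n ∈ Finset.range (N + 1),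
        c n * (((1 - γ + (n:ℝ)) - 1) * z ^ (((1 - γ + (n:ℝ)) - 1) - 1) * (1 - z) ^ ((1 - δ) - 1)
          - ((1 - δ) - 1) * z ^ ((1 - γ + (n:ℝ)) - 1) * (1 - z) ^ (((1 - δ) - 1) - 1)))
      + (γ * (z - 1) * (z - a) + δ * z * (z - a) + ε * z * (z - 1)) *
          (∑ n ∈ Finset.range (N + 1),
            c n * (z ^ ((1 - γ + (n:ℝ)) - 1) * (1 - z) ^ ((1 - δ) - 1)))
      = q * (∑ n ∈ Finset.range (N + 1), c n * incBeta (1 - γ + n) (1 - δ) z) := by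
    rw [hq0, Finset.mul_sum, Finset.mul_sum, ← Finset.sum_add_distrib, ← sub_eq_zero,
      ← Finset.sum_sub_distrib]
    have hGsum : ∑ n ∈ Finset.range (N + 1), (Gf (n + 1) - Gf n) = 0 := by
      rw [Finset.sum_range_sub Gf (N + 1)]
      simp only [hGf]
      rw [hvanish (N + 1) (by omega)]
      norm_num
    rw [← hGsum]
    refine Finset.sum_congr rfl fun n _ => ?_
    have hA : z ^ (1 - γ + (n:ℝ)) = z ^ (1 - γ + (n:ℝ) - 1) * z := by
      rw [← Real.rpow_add_one hzne, sub_add_cancel]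
    have hB2 : (1 - z) ^ (1 - δ) = (1 - z) ^ (1 - δ - 1) * (1 - z) := by
      rw [← Real.rpow_add_one h1zne, sub_add_cancel]
    have hC : z ^ (1 - γ + ((n:ℝ) + 1) - 1) = z ^ (1 - γ + (n:ℝ) - 1) * z := by
      rw [← Real.rpow_add_one hzne]
      congr 1
      ring
    have hD : z ^ (1 - γ + (n:ℝ) - 1 - 1) = z ^ (1 - γ + (n:ℝ) - 1) / z := by
      rw [Real.rpow_sub hz0, Real.rpow_one]
    have hE : (1 - z) ^ (1 - δ - 1 - 1) = (1 - z) ^ (1 - δ - 1) / (1 - z) := by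
      rw [Real.rpow_sub h1z, Real.rpow_one]
    simp only [hGf, hd]
    push_cast
    rw [hD, hE, hA, hB2, hC]
    field_simp
    ring
  set s0 := ∑ n ∈ Finset.range (N + 1), c n * incBeta (1 - γ + (n:ℝ)) (1 - δ) z with hs0
  set s1 := ∑ n ∈ Finset.range (N + 1),
      c n * (z ^ ((1 - γ + (n:ℝ)) - 1) * (1 - z) ^ ((1 - δ) - 1)) with hs1
  set s2 := ∑ n ∈ Finset.range (N + 1),
      c n * (((1 - γ + (n:ℝ)) - 1) * z ^ (((1 - γ + (n:ℝ)) - 1) - 1) * (1 - z) ^ ((1 - δ) - 1)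
        - ((1 - δ) - 1) * z ^ ((1 - γ + (n:ℝ)) - 1) * (1 - z) ^ (((1 - δ) - 1) - 1)) with hs2
  have hexp : s2 + (γ / z + δ / (z - 1) + ε / (z - a)) * s1
      - q / (z * (z - 1) * (z - a)) * s0
      = (z * (z - 1) * (z - a) * s2
          + (γ * (z - 1) * (z - a) + δ * z * (z - a) + ε * z * (z - 1)) * s1 - q * s0)
        / (z * (z - 1) * (z - a)) := by
    field_simp
  rw [hexp, hmain, sub_self, zero_div]
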